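/- Fix positive integers L ≥ 2 and T. The set of functions obtained by composing a linear layer with instance normalisation — i.e., functions of the form f(x) = μ(x)·1_T + σ(x)·(A·((x − μ(x)·1_L)/σ(x)) + b), defined for x ∈ ℝ^L with σ(x) > 0, where A ranges over T×L real matrices and b over ℝ^T — is exactly equal to the set of functions of the form x ↦ Ã·x + σ(x)·b̃, where b̃ ∈ ℝ^T and Ã is a T×L real matrix each of whose rows sums to 1. More precisely: for every (A, b) there exist such (Ã, b̃) with f(x) = Ã·x + σ(x)·b̃ for all x with σ(x) > 0, and conversely for every (Ã, b̃) with rows of Ã summing to 1 there exist (A, b) realizing the same function on {x : σ(x) > 0}. -/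

import Mathlib

/-- The mean of the components of `x ∈ ℝ^L`. -/
noncomputable def mea (L : ℕ) (x : Fin L → ℝ) : ℝ := (∑ i, x i) / L

/-- The (population) standard deviation of the components of `x ∈ ℝ^L`. -/
noncomputable def sdev (L : ℕ) (x : Fin L → ℝ) : ℝ :=
  Real.sqrt ((∑ i, (x i - mea L x) ^ 2) / L)

lemma norm_expand (L T : ℕ) (A : Matrix (Fin T) (Fin L) ℝ) (b : Fin T → ℝ)
    (x : Fin L → ℝ) (hx : 0 < sdev L x) (i : Fin T) :
    mea L x + sdev L x * (A.mulVec (fun j => (x j - mea L x) / sdev L x) i + b i) =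
      (∑ j, A i j * x j) + (1 - ∑ j, A i j) * mea L x + sdev L x * b i := by
  have hs : sdev L x ≠ 0 := ne_of_gt hx
  have h1 : A.mulVec (fun j => (x j - mea L x) / sdev L x) i
      = ((∑ j, A i j * (x j - mea L x))) / sdev L x := by
    simp [Matrix.mulVec, dotProduct, Finset.sum_div, mul_div_assoc]
  rw [h1, mul_add, mul_div_cancel₀ _ hs]
  have h2 : ∑ j, A i j * (x j - mea L x)
      = (∑ j, A i j * x j) - (∑ j, A i j) * mea L x := by
    rw [Finset.sum_mul, ← Finset.sum_sub_distrib]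
    exact Finset.sum_congr rfl fun j _ => by ring
  rw [h2]; ring

/-- A linear layer composed with instance normalisation realizes exactly the
functions `x ↦ Ã·x + σ(x)·b̃` with the rows of `Ã` summing to 1, on `{x : σ(x) > 0}`. -/
theorem linear_instance_norm_class (L T : ℕ) (hL : 2 ≤ L) (hT : 0 < T) :
    (∀ (A : Matrix (Fin T) (Fin L) ℝ) (b : Fin T → ℝ),
      ∃ (At : Matrix (Fin T) (Fin L) ℝ) (bt : Fin T → ℝ),
        (∀ i, ∑ j, At i j = 1) ∧
        ∀ x : Fin L → ℝ, 0 < sdev L x →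
          (fun i => mea L x + sdev L x *
              (A.mulVec (fun j => (x j - mea L x) / sdev L x) i + b i)) =
            At.mulVec x + sdev L x • bt) ∧
    (∀ (At : Matrix (Fin T) (Fin L) ℝ) (bt : Fin T → ℝ), (∀ i, ∑ j, At i j = 1) →
      ∃ (A : Matrix (Fin T) (Fin L) ℝ) (b : Fin T → ℝ),
        ∀ x : Fin L → ℝ, 0 < sdev L x →
          (fun i => mea L x + sdev L x *
              (A.mulVec (fun j => (x j - mea L x) / sdev L x) i + b i)) =
            At.mulVec x + sdev L x • bt) := by
  have hL0 : (L : ℝ) ≠ 0 := by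
    have h : (0:ℝ) < L := by exact_mod_cast lt_of_lt_of_le (by norm_num) hL
    exact ne_of_gt h
  constructor
  · intro A b
    refine ⟨fun i j => A i j + (1 - ∑ k, A i k) / L, b, ?_, ?_⟩
    · intro i
      rw [Finset.sum_add_distrib, Finset.sum_const, Finset.card_univ, Fintype.card_fin]
      rw [nsmul_eq_mul]
      field_simp
      ring
    · intro x hx
      funext i
      rw [norm_expand L T A b x hx i]
      simp only [Matrix.mulVec, dotProduct, Pi.add_apply, Pi.smul_apply, smul_eq_mul]
      rw [show ∀ f : Fin L → ℝ, ∑ j, (A i j + (1 - ∑ k, A i k) / L) * f j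
          = (∑ j, A i j * f j) + ((1 - ∑ k, A i k) / L) * ∑ j, f j from
        fun f => by rw [Finset.mul_sum, ← Finset.sum_add_distrib]; congr 1; ext j; ring]
      unfold mea
      field_simp
  · intro At bt hrow
    refine ⟨At, bt, ?_⟩
    intro x hx
    funext i
    rw [norm_expand L T At bt x hx i, hrow i]
    simp [Matrix.mulVec, dotProduct]
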